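/- If h ∈ ℤ[t] is monic and all its complex roots lie in the closed unit disk, then every root of h is either 0 or a root of unity. -/

import Mathlib

open Polynomial IntermediateField

private lemma aux_prod_le_one (s : Multiset ℝ) (h : ∀ x ∈ s, 0 ≤ x ∧ x ≤ 1) :
    s.prod ≤ 1 := by
  induction s using Multiset.induction with
  | empty => simp
  | cons a t ih =>
    rw [Multiset.prod_cons]
    have ha := h a (Multiset.mem_cons_self a t)
    have ht := ih fun x hx => h x (Multiset.mem_cons_of_mem hx)
    calc a * t.prod ≤ a * 1 := by
          refine mul_le_mul_of_nonneg_left ht ha.1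
      _ ≤ 1 := by simpa using ha.2

private lemma aux_all_one (s : Multiset ℝ) (h : ∀ x ∈ s, 0 ≤ x ∧ x ≤ 1)
    (hp : 1 ≤ s.prod) : ∀ x ∈ s, x = 1 := by
  intro x hx
  have hs : s = x ::ₘ s.erase x := (Multiset.cons_erase hx).symm
  have herase : (s.erase x).prod ≤ 1 :=
    aux_prod_le_one _ fun y hy => h y (Multiset.mem_of_mem_erase hy)
  have hxx := h x hx
  have : s.prod ≤ x := by
    rw [hs, Multiset.prod_cons]
    calc x * (s.erase x).prod ≤ x * 1 := mul_le_mul_of_nonneg_left herase hxx.1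
      _ = x := mul_one x
  exact le_antisymm hxx.2 (hp.trans this)

set_option maxHeartbeats 1000000 in
/-- Kronecker's theorem: if `h ∈ ℤ[t]` is monic and all its complex
roots lie in the closed unit disk, then every root of `h` is either `0` or a root
of unity. -/
theorem kronecker (h : Polynomial ℤ) (hm : h.Monic)
    (hb : ∀ α ∈ (h.map (Int.castRingHom ℂ)).roots, ‖α‖ ≤ 1) :
    ∀ α ∈ (h.map (Int.castRingHom ℂ)).roots, α = 0 ∨ ∃ k : ℕ, 0 < k ∧ α ^ k = 1 := by
  intro α hα
  rcases eq_or_ne α 0 with rfl | hα0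
  · exact Or.inl rfl
  right
  have hmapne : h.map (Int.castRingHom ℂ) ≠ 0 := (hm.map _).ne_zero
  have hroot : aeval α h = 0 := by
    have := (mem_roots hmapne).1 hα
    rw [IsRoot, eval_map] at this
    rw [aeval_def]
    exact this
  have hint : IsIntegral ℤ α := ⟨h, hm, by rwa [← aeval_def]⟩
  set p : Polynomial ℤ := minpoly ℤ α with hp
  have hpmonic : p.Monic := minpoly.monic hint
  have hpdvd : p ∣ h := minpoly.isIntegrallyClosed_dvd hint hroot
  -- all roots of p over ℂ lie in the closed unit disk
  have hproots : ∀ β ∈ (p.map (Int.castRingHom ℂ)).roots, ‖β‖ ≤ 1 := by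
    intro β hβ
    refine hb β (Multiset.mem_of_le ?_ hβ)
    exact Polynomial.roots.le_of_dvd hmapne (Polynomial.map_dvd _ hpdvd)
  -- product of absolute values of roots is |coeff 0| ≥ 1
  have hintQ : IsIntegral ℚ α := hint.tower_top
  have hqeq : minpoly ℚ α = p.map (Int.castRingHom ℚ) :=
    minpoly.isIntegrallyClosed_eq_field_fractions' ℚ hint
  have hc0 : p.coeff 0 ≠ 0 := by
    have := minpoly.coeff_zero_ne_zero hintQ hα0
    rw [hqeq, coeff_map] at this
    intro hcontra
    rw [hcontra] at this
    simp at this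
  have hsplits : Splits (p.map (Int.castRingHom ℂ)) :=
    IsAlgClosed.splits _
  have hprodroots :
      (p.map (Int.castRingHom ℂ)).coeff 0 =
        (-1) ^ (p.map (Int.castRingHom ℂ)).natDegree *
          (p.map (Int.castRingHom ℂ)).roots.prod :=
    (hsplits.coeff_zero_eq_prod_roots_of_monic (hpmonic.map _))
  have habsprod :
      ((p.map (Int.castRingHom ℂ)).roots.map (‖·‖)).prod =
        ‖(p.map (Int.castRingHom ℂ)).coeff 0‖ := by
    rw [hprodroots, norm_mul, norm_pow, norm_neg, norm_one, one_pow, one_mul]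
    exact (map_multiset_prod (normHom : ℂ →*₀ ℝ) _).symm
  have hcoeff0 : (p.map (Int.castRingHom ℂ)).coeff 0 = (p.coeff 0 : ℂ) := by
    simp [coeff_map]
  have hone_le : 1 ≤ ((p.map (Int.castRingHom ℂ)).roots.map (‖·‖)).prod := by
    rw [habsprod, hcoeff0]
    rw [Complex.norm_intCast]
    exact_mod_cast Int.one_le_abs hc0
  -- hence all roots of p have absolute value 1
  have hall1 : ∀ β ∈ (p.map (Int.castRingHom ℂ)).roots, ‖β‖ = 1 := by
    intro β hβ
    have := aux_all_one ((p.map (Int.castRingHom ℂ)).roots.map (‖·‖))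
      (fun x hx => by
        obtain ⟨γ, hγ, rfl⟩ := Multiset.mem_map.1 hx
        exact ⟨norm_nonneg _, hproots γ hγ⟩) hone_le
    exact this _ (Multiset.mem_map_of_mem _ hβ)
  -- set up the number field ℚ⟮α⟯
  haveI : FiniteDimensional ℚ ℚ⟮α⟯ := IntermediateField.adjoin.finiteDimensional hintQ
  haveI : NumberField ℚ⟮α⟯ := ⟨⟩
  set x : ℚ⟮α⟯ := IntermediateField.AdjoinSimple.gen ℚ α with hxdef
  have hxα : algebraMap ℚ⟮α⟯ ℂ x = α := IntermediateField.AdjoinSimple.algebraMap_gen ℚ α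
  have hinj : Function.Injective (algebraMap ℚ⟮α⟯ ℂ) := (algebraMap ℚ⟮α⟯ ℂ).injective
  have hxint : IsIntegral ℤ x := by
    rw [← isIntegral_algebraMap_iff hinj, hxα]; exact hint
  -- minpoly of x over ℚ is the rational map of p
  have hminx : minpoly ℚ x = p.map (Int.castRingHom ℚ) := by
    rw [← minpoly.algebraMap_eq hinj x, hxα]
    exact minpoly.isIntegrallyClosed_eq_field_fractions' ℚ hint
  -- every embedding has norm 1 on x
  have hnorm : ∀ φ : ℚ⟮α⟯ →+* ℂ, ‖φ x‖ = 1 := by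
    intro φ
    have hev : aeval (φ x) (minpoly ℚ x) = 0 := by
      show aeval (φ.toRatAlgHom x) (minpoly ℚ x) = 0
      rw [aeval_algHom_apply, minpoly.aeval]
      exact map_zero _
    have hxintQ : IsIntegral ℚ x := hxint.tower_top
    have hne : (minpoly ℚ x).map (algebraMap ℚ ℂ) ≠ 0 :=
      ((minpoly.monic hxintQ).map _).ne_zero
    have hmem : φ x ∈ (p.map (Int.castRingHom ℂ)).roots := by
      have : p.map (Int.castRingHom ℂ) = (minpoly ℚ x).map (algebraMap ℚ ℂ) := by
        rw [hminx, Polynomial.map_map]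
        congr 1
      rw [this, mem_roots hne, IsRoot, eval_map, ← aeval_def]
      exact hev
    exact hall1 _ hmem
  obtain ⟨n, hn, hxn⟩ :=
    NumberField.Embeddings.pow_eq_one_of_norm_eq_one ℚ⟮α⟯ ℂ hxint hnorm
  refine ⟨n, hn, ?_⟩
  rw [← hxα, ← map_pow, hxn, map_one]
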